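/- If the images (random variables) X_1,...,X_m are partitioned into independent groups by partition P*, i.e., the tuples (X^C)_{C∈P*} are mutually independent, and |P*| > 1, then P* minimizes the partition information over all partitions with more than one cluster, and the minimum partition information is zero. Moreover, any partition P with I_P = 0 is coarser than or equal to a refinement structure consistent with P* whenever variables within each cluster of P* are pairwise dependent. -/

import Mathlib

open Finset
open scoped Classical
set_option linter.unusedSectionVars false
set_option linter.unusedVariables false

/-- Shannon entropy (in bits) of the distribution of a random variable `Y` on a finite
probability space with weights `μ`. -/
noncomputable def ent {Ω β : Type*} [Fintype Ω] [Fintype β] [DecidableEq β]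
    (μ : Ω → ℝ) (Y : Ω → β) : ℝ :=
  -∑ b : β, (∑ ω ∈ univ.filter (fun ω => Y ω = b), μ ω) *
      Real.logb 2 (∑ ω ∈ univ.filter (fun ω => Y ω = b), μ ω)

section aux

variable {Ω : Type*} [Fintype Ω] {γ γ₁ γ₂ γ₃ : Type*} [Fintype γ] [DecidableEq γ]
  [Fintype γ₁] [DecidableEq γ₁] [Fintype γ₂] [DecidableEq γ₂] [Fintype γ₃] [DecidableEq γ₃]

noncomputable def pr (μ : Ω → ℝ) (Y : Ω → γ) (b : γ) : ℝ :=
  ∑ ω ∈ univ.filter (fun ω => Y ω = b), μ ω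

lemma ent_eq (μ : Ω → ℝ) (Y : Ω → γ) :
    ent μ Y = -∑ b, pr μ Y b * Real.logb 2 (pr μ Y b) := rfl

lemma pr_nonneg {μ : Ω → ℝ} (hμ : ∀ ω, 0 ≤ μ ω) (Y : Ω → γ) (b : γ) : 0 ≤ pr μ Y b :=
  Finset.sum_nonneg fun ω _ => hμ ω

lemma sum_pr (μ : Ω → ℝ) (Y : Ω → γ) : ∑ b, pr μ Y b = ∑ ω, μ ω :=
  Finset.sum_fiberwise _ _ _

lemma pr_eq_of_iff (μ : Ω → ℝ) (Y : Ω → γ₁) (Z : Ω → γ₂) (a : γ₁) (b : γ₂)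
    (h : ∀ ω, Y ω = a ↔ Z ω = b) : pr μ Y a = pr μ Z b := by
  unfold pr
  congr 1
  exact Finset.filter_congr fun ω _ => h ω

lemma pr_le_of_imp {μ : Ω → ℝ} (hμ : ∀ ω, 0 ≤ μ ω) (Y : Ω → γ₁) (Z : Ω → γ₂) (a : γ₁) (b : γ₂)
    (h : ∀ ω, Y ω = a → Z ω = b) : pr μ Y a ≤ pr μ Z b := by
  apply Finset.sum_le_sum_of_subset_of_nonneg
  · intro ω hω
    simp only [Finset.mem_filter, Finset.mem_univ, true_and] at *
    exact h ω hω
  · exact fun ω _ _ => hμ ω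

lemma pr_marg_snd (μ : Ω → ℝ) (Y : Ω → γ₁) (Z : Ω → γ₂) (y : γ₁) :
    ∑ z, pr μ (fun ω => (Y ω, Z ω)) (y, z) = pr μ Y y := by
  unfold pr
  rw [← Finset.sum_fiberwise (univ.filter (fun ω => Y ω = y)) Z μ]
  refine Finset.sum_congr rfl fun z _ => ?_
  rw [Finset.filter_filter]
  congr 1
  exact Finset.filter_congr fun ω _ => by simp [Prod.ext_iff]

lemma pr_marg_fst (μ : Ω → ℝ) (Y : Ω → γ₁) (Z : Ω → γ₂) (z : γ₂) :
    ∑ y, pr μ (fun ω => (Y ω, Z ω)) (y, z) = pr μ Z z := by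
  unfold pr
  rw [← Finset.sum_fiberwise (univ.filter (fun ω => Z ω = z)) Y μ]
  refine Finset.sum_congr rfl fun y _ => ?_
  rw [Finset.filter_filter]
  congr 1
  exact Finset.filter_congr fun ω _ => by simp [Prod.ext_iff, and_comm]

lemma ent_comp_inj (μ : Ω → ℝ) (φ : γ₁ → γ₂) (hφ : Function.Injective φ) (Y : Ω → γ₁) :
    ent μ (fun ω => φ (Y ω)) = ent μ Y := by
  rw [ent_eq, ent_eq]
  congr 1
  rw [← Finset.sum_subset (Finset.subset_univ (Finset.image φ univ))]
  · rw [Finset.sum_image (fun a _ b _ h => hφ h)]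
    refine Finset.sum_congr rfl fun b _ => ?_
    rw [pr_eq_of_iff μ (fun ω => φ (Y ω)) Y (φ b) b (fun ω => hφ.eq_iff)]
  · intro c _ hc
    have : pr μ (fun ω => φ (Y ω)) c = 0 := by
      unfold pr
      rw [Finset.filter_false_of_mem, Finset.sum_empty]
      intro ω _ h
      exact hc (Finset.mem_image.2 ⟨Y ω, Finset.mem_univ _, h⟩)
    rw [this, zero_mul]

lemma ent_subsingleton [Subsingleton γ] {μ : Ω → ℝ} (hsum : ∑ ω, μ ω = 1) (Y : Ω → γ) :
    ent μ Y = 0 := by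
  rw [ent_eq]
  have h : ∀ b : γ, pr μ Y b = 1 := by
    intro b
    unfold pr
    rw [Finset.filter_true_of_mem (fun ω _ => Subsingleton.elim _ _)]
    exact hsum
  simp only [h, Real.logb_one, mul_zero, Finset.sum_const_zero, neg_zero]

lemma ent_pair_of_indep {μ : Ω → ℝ} (hsum : ∑ ω, μ ω = 1) (Y : Ω → γ₁) (Z : Ω → γ₂)
    (h : ∀ y z, pr μ (fun ω => (Y ω, Z ω)) (y, z) = pr μ Y y * pr μ Z z) :
    ent μ (fun ω => (Y ω, Z ω)) = ent μ Y + ent μ Z := by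
  have hY : ∑ y, pr μ Y y = 1 := (sum_pr μ Y).trans hsum
  have hZ : ∑ z, pr μ Z z = 1 := (sum_pr μ Z).trans hsum
  rw [ent_eq, ent_eq, ent_eq, Fintype.sum_prod_type]
  have key : ∀ y z, pr μ (fun ω => (Y ω, Z ω)) (y, z) *
      Real.logb 2 (pr μ (fun ω => (Y ω, Z ω)) (y, z)) =
      (pr μ Y y * Real.logb 2 (pr μ Y y)) * pr μ Z z +
        pr μ Y y * (pr μ Z z * Real.logb 2 (pr μ Z z)) := by
    intro y z
    rw [h]
    rcases eq_or_ne (pr μ Y y) 0 with h0 | h0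
    · simp [h0]
    rcases eq_or_ne (pr μ Z z) 0 with h1 | h1
    · simp [h1]
    rw [Real.logb_mul h0 h1]
    ring
  have e : ∀ y, ∑ z, ((pr μ Y y * Real.logb 2 (pr μ Y y)) * pr μ Z z +
      pr μ Y y * (pr μ Z z * Real.logb 2 (pr μ Z z)))
      = pr μ Y y * Real.logb 2 (pr μ Y y)
        + pr μ Y y * (∑ z, pr μ Z z * Real.logb 2 (pr μ Z z)) := by
    intro y
    rw [Finset.sum_add_distrib, ← Finset.mul_sum, ← Finset.mul_sum, hZ, mul_one]
  simp_rw [key, e]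
  rw [Finset.sum_add_distrib, ← Finset.sum_mul, hY, one_mul]
  ring

lemma pr_le_one {μ : Ω → ℝ} (hμ : ∀ ω, 0 ≤ μ ω) (hsum : ∑ ω, μ ω = 1)
    (Y : Ω → γ) (b : γ) : pr μ Y b ≤ 1 := by
  calc pr μ Y b ≤ ∑ c, pr μ Y c :=
        Finset.single_le_sum (fun c _ => pr_nonneg hμ Y c) (Finset.mem_univ b)
    _ = 1 := (sum_pr μ Y).trans hsum

lemma ent_nonneg {μ : Ω → ℝ} (hμ : ∀ ω, 0 ≤ μ ω) (hsum : ∑ ω, μ ω = 1)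
    (Y : Ω → γ) : 0 ≤ ent μ Y := by
  rw [ent_eq, neg_nonneg]
  refine Finset.sum_nonpos fun b _ => ?_
  exact mul_nonpos_of_nonneg_of_nonpos (pr_nonneg hμ Y b)
    (Real.logb_nonpos one_lt_two (pr_nonneg hμ Y b) (pr_le_one hμ hsum Y b))

lemma submodular {μ : Ω → ℝ} (hμ : ∀ ω, 0 ≤ μ ω) (hsum : ∑ ω, μ ω = 1)
    (U : Ω → γ₁) (V : Ω → γ₂) (W : Ω → γ₃) :
    ent μ V + ent μ (fun ω => (U ω, (V ω, W ω))) ≤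
      ent μ (fun ω => (U ω, V ω)) + ent μ (fun ω => (V ω, W ω)) := by
  set p3 : γ₁ × γ₂ × γ₃ → ℝ := pr μ (fun ω => (U ω, (V ω, W ω))) with hp3def
  set pUV : γ₁ × γ₂ → ℝ := pr μ (fun ω => (U ω, V ω)) with hpUVdef
  set pVW : γ₂ × γ₃ → ℝ := pr μ (fun ω => (V ω, W ω)) with hpVWdef
  set pV : γ₂ → ℝ := pr μ V with hpVdef
  have m1 : ∀ y : γ₂ × γ₃, ∑ u, p3 (u, y) = pVW y := fun y =>
    pr_marg_fst μ U (fun ω => (V ω, W ω)) y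
  have m3 : ∀ (u : γ₁) (v : γ₂), ∑ w, p3 (u, v, w) = pUV (u, v) := by
    intro u v
    have e : ∀ w, p3 (u, v, w)
        = pr μ (fun ω => ((U ω, V ω), W ω)) ((u, v), w) := by
      intro w
      exact pr_eq_of_iff μ _ _ _ _ (fun ω => by simp [Prod.ext_iff]; tauto)
    simp_rw [e]
    exact pr_marg_snd μ (fun ω => (U ω, V ω)) W (u, v)
  have m1' : ∀ v : γ₂, ∑ u, pUV (u, v) = pV v := fun v => pr_marg_fst μ U V v
  have E1 : ∑ x : γ₁ × γ₂ × γ₃, p3 x * Real.logb 2 (pUV (x.1, x.2.1))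
      = ∑ y : γ₁ × γ₂, pUV y * Real.logb 2 (pUV y) := by
    rw [Fintype.sum_prod_type, Fintype.sum_prod_type]
    refine Finset.sum_congr rfl fun u _ => ?_
    rw [Fintype.sum_prod_type]
    refine Finset.sum_congr rfl fun v _ => ?_
    dsimp only
    rw [← Finset.sum_mul, m3 u v]
  have E2 : ∑ x : γ₁ × γ₂ × γ₃, p3 x * Real.logb 2 (pVW x.2)
      = ∑ y : γ₂ × γ₃, pVW y * Real.logb 2 (pVW y) := by
    rw [Fintype.sum_prod_type, Finset.sum_comm]
    refine Finset.sum_congr rfl fun y _ => ?_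
    dsimp only
    rw [← Finset.sum_mul, m1 y]
  have E3 : ∑ x : γ₁ × γ₂ × γ₃, p3 x * Real.logb 2 (pV x.2.1)
      = ∑ v : γ₂, pV v * Real.logb 2 (pV v) := by
    rw [Fintype.sum_prod_type, Finset.sum_comm]
    have h1 : ∀ y : γ₂ × γ₃, ∑ u, p3 (u, y) * Real.logb 2 (pV y.1)
        = pVW y * Real.logb 2 (pV y.1) := by
      intro y; rw [← Finset.sum_mul, m1 y]
    simp_rw [h1]
    rw [Fintype.sum_prod_type]
    refine Finset.sum_congr rfl fun v _ => ?_
    dsimp only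
    rw [← Finset.sum_mul, pr_marg_snd μ V W v]
  suffices h : 0 ≤ ∑ x : γ₁ × γ₂ × γ₃, p3 x *
      (Real.logb 2 (pV x.2.1) + Real.logb 2 (p3 x)
        - Real.logb 2 (pUV (x.1, x.2.1)) - Real.logb 2 (pVW x.2)) by
    have expand : ∑ x : γ₁ × γ₂ × γ₃, p3 x *
        (Real.logb 2 (pV x.2.1) + Real.logb 2 (p3 x)
          - Real.logb 2 (pUV (x.1, x.2.1)) - Real.logb 2 (pVW x.2))
        = (∑ x : γ₁ × γ₂ × γ₃, p3 x * Real.logb 2 (pV x.2.1))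
          + (∑ x : γ₁ × γ₂ × γ₃, p3 x * Real.logb 2 (p3 x))
          - (∑ x : γ₁ × γ₂ × γ₃, p3 x * Real.logb 2 (pUV (x.1, x.2.1)))
          - (∑ x : γ₁ × γ₂ × γ₃, p3 x * Real.logb 2 (pVW x.2)) := by
      simp_rw [mul_sub, mul_add]
      rw [Finset.sum_sub_distrib, Finset.sum_sub_distrib, Finset.sum_add_distrib]
    rw [expand, E1, E2, E3] at h
    rw [ent_eq μ V, ent_eq μ (fun ω => (U ω, (V ω, W ω))),
      ent_eq μ (fun ω => (U ω, V ω)), ent_eq μ (fun ω => (V ω, W ω))]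
    rw [← hpVdef, ← hp3def, ← hpUVdef, ← hpVWdef]
    linarith
  set s : Finset (γ₁ × γ₂ × γ₃) := univ.filter (fun x => 0 < p3 x) with hs
  have hz : ∀ x ∈ (univ : Finset (γ₁ × γ₂ × γ₃)), x ∉ s → p3 x *
      (Real.logb 2 (pV x.2.1) + Real.logb 2 (p3 x)
        - Real.logb 2 (pUV (x.1, x.2.1)) - Real.logb 2 (pVW x.2)) = 0 := by
    intro x _ hx
    have : p3 x = 0 := le_antisymm (by simpa [hs] using hx) (pr_nonneg hμ _ _)
    rw [this, zero_mul]
  rw [← Finset.sum_subset (Finset.subset_univ s) hz]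
  have hposp3 : ∀ x ∈ s, 0 < p3 x := fun x hx => by simpa [hs] using hx
  have hposUV : ∀ x ∈ s, 0 < pUV (x.1, x.2.1) := by
    intro x hx
    exact lt_of_lt_of_le (hposp3 x hx) (pr_le_of_imp hμ _ _ _ _
      (fun ω h => by simp only [Prod.ext_iff] at h ⊢; tauto))
  have hposVW : ∀ x ∈ s, 0 < pVW x.2 := by
    intro x hx
    exact lt_of_lt_of_le (hposp3 x hx) (pr_le_of_imp hμ _ _ _ _
      (fun ω h => by simp only [Prod.ext_iff] at h ⊢; tauto))
  have hposV : ∀ x ∈ s, 0 < pV x.2.1 := by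
    intro x hx
    exact lt_of_lt_of_le (hposp3 x hx) (pr_le_of_imp hμ _ _ _ _
      (fun ω h => by simp only [Prod.ext_iff] at h ⊢; tauto))
  set t : γ₁ × γ₂ × γ₃ → ℝ :=
    fun x => pUV (x.1, x.2.1) * pVW x.2 / (pV x.2.1 * p3 x) with ht
  have tpos : ∀ x ∈ s, 0 < t x := fun x hx =>
    div_pos (mul_pos (hposUV x hx) (hposVW x hx))
      (mul_pos (hposV x hx) (hposp3 x hx))
  have term_eq : ∀ x ∈ s, p3 x *
      (Real.logb 2 (pV x.2.1) + Real.logb 2 (p3 x)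
        - Real.logb 2 (pUV (x.1, x.2.1)) - Real.logb 2 (pVW x.2))
      = -(p3 x * Real.logb 2 (t x)) := by
    intro x hx
    have h1 := (hposUV x hx).ne'
    have h2 := (hposVW x hx).ne'
    have h3 := (hposV x hx).ne'
    have h4 := (hposp3 x hx).ne'
    rw [ht]
    simp only []
    rw [Real.logb_div (mul_ne_zero h1 h2) (mul_ne_zero h3 h4),
      Real.logb_mul h1 h2, Real.logb_mul h3 h4]
    ring
  rw [Finset.sum_congr rfl term_eq, Finset.sum_neg_distrib, neg_nonneg]
  -- now: ∑ x in s, p3 x * logb 2 (t x) ≤ 0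
  have hw1 : ∑ x ∈ s, p3 x = 1 := by
    rw [Finset.sum_subset (Finset.subset_univ s) (fun x _ hx =>
      le_antisymm (by simpa [hs] using hx) (pr_nonneg hμ _ _))]
    exact (sum_pr μ _).trans hsum
  have jensen := (strictConcaveOn_log_Ioi.concaveOn).le_map_sum
    (fun x hx => (hposp3 x hx).le) hw1 (fun x hx => Set.mem_Ioi.2 (tpos x hx))
  simp only [smul_eq_mul] at jensen
  have hB1 : ∑ x ∈ s, p3 x * t x ≤ 1 := by
    have hBt : ∀ x ∈ s, p3 x * t x
        = pUV (x.1, x.2.1) * pVW x.2 / pV x.2.1 := by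
      intro x hx
      have h3 := (hposV x hx).ne'
      have h4 := (hposp3 x hx).ne'
      rw [ht]
      field_simp
    rw [Finset.sum_congr rfl hBt]
    have hsub : ∑ x ∈ s, pUV (x.1, x.2.1) * pVW x.2 / pV x.2.1
        ≤ ∑ x ∈ univ.filter (fun x : γ₁ × γ₂ × γ₃ => 0 < pV x.2.1),
            pUV (x.1, x.2.1) * pVW x.2 / pV x.2.1 := by
      apply Finset.sum_le_sum_of_subset_of_nonneg
      · intro x hx
        simp only [Finset.mem_filter, Finset.mem_univ, true_and]
        exact hposV x hx
      · intro x hx _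
        simp only [Finset.mem_filter, Finset.mem_univ, true_and] at hx
        apply div_nonneg _ (le_of_lt hx)
        apply mul_nonneg
        · rw [hpUVdef]; exact pr_nonneg hμ _ _
        · rw [hpVWdef]; exact pr_nonneg hμ _ _
    refine hsub.trans ?_
    rw [Finset.sum_filter, Fintype.sum_prod_type, Finset.sum_comm]
    have hterm : ∀ y : γ₂ × γ₃,
        (∑ u, if 0 < pV y.1 then pUV (u, y.1) * pVW y / pV y.1 else 0)
          ≤ pVW y := by
      intro y
      by_cases hc : 0 < pV y.1
      · simp only [if_pos hc]
        have e : ∑ u, pUV (u, y.1) * pVW y / pV y.1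
            = pV y.1 * (pVW y / pV y.1) := by
          simp_rw [mul_div_assoc]
          rw [← Finset.sum_mul, m1' y.1]
        rw [e, mul_comm, div_mul_cancel₀ _ hc.ne']
      · simp only [if_neg hc, Finset.sum_const_zero]
        rw [hpVWdef]; exact pr_nonneg hμ _ _
    calc ∑ y : γ₂ × γ₃, ∑ u, (if 0 < pV y.1 then pUV (u, y.1) * pVW y / pV y.1 else 0)
        ≤ ∑ y : γ₂ × γ₃, pVW y := Finset.sum_le_sum fun y _ => hterm y
      _ = 1 := by rw [hpVWdef]; exact (sum_pr μ _).trans hsum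
  have hB0 : 0 ≤ ∑ x ∈ s, p3 x * t x :=
    Finset.sum_nonneg fun x hx => (mul_pos (hposp3 x hx) (tpos x hx)).le
  have hlogB : Real.log (∑ x ∈ s, p3 x * t x) ≤ 0 := Real.log_nonpos hB0 hB1
  have hJ : ∑ x ∈ s, p3 x * Real.log (t x) ≤ 0 := le_trans jensen hlogB
  have hlog2 : (0:ℝ) < Real.log 2 := Real.log_pos one_lt_two
  simp only [Real.logb]
  calc ∑ x ∈ s, p3 x * (Real.log (t x) / Real.log 2)
      = (∑ x ∈ s, p3 x * Real.log (t x)) / Real.log 2 := by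
        rw [Finset.sum_div]
        exact Finset.sum_congr rfl fun x _ => by ring
    _ ≤ 0 := div_nonpos_of_nonpos_of_nonneg hJ hlog2.le

end aux

/-- Joint entropy `H(Z^S)` of the sub-collection of variables indexed by `S`. -/
noncomputable def entS {Ω β : Type*} [Fintype Ω] [Fintype β] [DecidableEq β] {n : ℕ}
    (μ : Ω → ℝ) (Z : Fin n → Ω → β) (S : Finset (Fin n)) : ℝ :=
  ent μ (fun ω => fun i : {x // x ∈ S} => Z i ω)

section finsetLayer

variable {Ω β : Type*} [Fintype Ω] [Fintype β] [DecidableEq β] {m : ℕ}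

lemma ent_pair_eq (μ : Ω → ℝ) (X : Fin m → Ω → β) (A B : Finset (Fin m)) :
    ent μ (fun ω => ((fun i : {x // x ∈ A} => X i ω), (fun i : {x // x ∈ B} => X i ω)))
      = entS μ X (A ∪ B) := by
  have hinj : Function.Injective (fun (h : {x // x ∈ A ∪ B} → β) =>
      ((fun i : {x // x ∈ A} => h ⟨i.1, Finset.mem_union_left B i.2⟩),
       (fun i : {x // x ∈ B} => h ⟨i.1, Finset.mem_union_right A i.2⟩))) := by
    intro h1 h2 he
    funext i
    rcases Finset.mem_union.1 i.2 with hA | hB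
    · have h' := congrFun (congrArg Prod.fst he) (⟨i.1, hA⟩ : {x // x ∈ A})
      dsimp only at h'
      have e : (⟨i.1, Finset.mem_union_left B hA⟩ : {x // x ∈ A ∪ B}) = i := Subtype.ext rfl
      rw [← e]; exact h'
    · have h' := congrFun (congrArg Prod.snd he) (⟨i.1, hB⟩ : {x // x ∈ B})
      dsimp only at h'
      have e : (⟨i.1, Finset.mem_union_right A hB⟩ : {x // x ∈ A ∪ B}) = i := Subtype.ext rfl
      rw [← e]; exact h'
  exact ent_comp_inj μ _ hinj (fun ω => fun i : {x // x ∈ A ∪ B} => X i ω)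

lemma ent_triple_eq (μ : Ω → ℝ) (X : Fin m → Ω → β) (A B C : Finset (Fin m)) :
    ent μ (fun ω => ((fun i : {x // x ∈ A} => X i ω),
        ((fun i : {x // x ∈ B} => X i ω), (fun i : {x // x ∈ C} => X i ω))))
      = entS μ X (A ∪ B ∪ C) := by
  have hinj : Function.Injective (fun (h : {x // x ∈ A ∪ B ∪ C} → β) =>
      ((fun i : {x // x ∈ A} => h ⟨i.1, Finset.mem_union_left C (Finset.mem_union_left B i.2)⟩),
       ((fun i : {x // x ∈ B} => h ⟨i.1, Finset.mem_union_left C (Finset.mem_union_right A i.2)⟩),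
        (fun i : {x // x ∈ C} => h ⟨i.1, Finset.mem_union_right (A ∪ B) i.2⟩)))) := by
    intro h1 h2 he
    funext i
    rcases Finset.mem_union.1 i.2 with hAB | hC
    · rcases Finset.mem_union.1 hAB with hA | hB
      · have h' := congrFun (congrArg Prod.fst he) (⟨i.1, hA⟩ : {x // x ∈ A})
        dsimp only at h'
        have e : (⟨i.1, Finset.mem_union_left C (Finset.mem_union_left B hA)⟩ :
            {x // x ∈ A ∪ B ∪ C}) = i := Subtype.ext rfl
        rw [← e]; exact h'
      · have h' := congrFun (congrArg (fun p => p.2.1) he) (⟨i.1, hB⟩ : {x // x ∈ B})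
        dsimp only at h'
        have e : (⟨i.1, Finset.mem_union_left C (Finset.mem_union_right A hB)⟩ :
            {x // x ∈ A ∪ B ∪ C}) = i := Subtype.ext rfl
        rw [← e]; exact h'
    · have h' := congrFun (congrArg (fun p => p.2.2) he) (⟨i.1, hC⟩ : {x // x ∈ C})
      dsimp only at h'
      have e : (⟨i.1, Finset.mem_union_right (A ∪ B) hC⟩ :
          {x // x ∈ A ∪ B ∪ C}) = i := Subtype.ext rfl
      rw [← e]; exact h'
  exact ent_comp_inj μ _ hinj (fun ω => fun i : {x // x ∈ A ∪ B ∪ C} => X i ω)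

lemma entS_nonneg {μ : Ω → ℝ} (hμ : ∀ ω, 0 ≤ μ ω) (hsum : ∑ ω, μ ω = 1)
    (X : Fin m → Ω → β) (S : Finset (Fin m)) : 0 ≤ entS μ X S :=
  ent_nonneg hμ hsum _

lemma entS_empty {μ : Ω → ℝ} (hsum : ∑ ω, μ ω = 1) (X : Fin m → Ω → β) :
    entS μ X ∅ = 0 := by
  haveI : IsEmpty {x : Fin m // x ∈ (∅ : Finset (Fin m))} :=
    ⟨fun x => (Finset.notMem_empty _ x.2)⟩
  exact ent_subsingleton hsum _

lemma entS_submodular {μ : Ω → ℝ} (hμ : ∀ ω, 0 ≤ μ ω) (hsum : ∑ ω, μ ω = 1)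
    (X : Fin m → Ω → β) (S T : Finset (Fin m)) :
    entS μ X (S ∪ T) + entS μ X (S ∩ T) ≤ entS μ X S + entS μ X T := by
  have h := submodular hμ hsum (fun ω => fun i : {x // x ∈ S \ T} => X i ω)
      (fun ω => fun i : {x // x ∈ S ∩ T} => X i ω)
      (fun ω => fun i : {x // x ∈ T \ S} => X i ω)
  rw [ent_pair_eq, ent_pair_eq, ent_triple_eq] at h
  have e1 : S \ T ∪ S ∩ T = S := by ext a; simp; tauto
  have e2 : S ∩ T ∪ T \ S = T := by ext a; simp; tauto
  rw [e1, e2, Finset.union_sdiff_self_eq_union] at h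
  have hV : entS μ X (S ∩ T) = ent μ (fun ω => fun i : {x // x ∈ S ∩ T} => X (↑i) ω) := rfl
  rw [← hV] at h
  linarith
  
lemma entS_union_le {μ : Ω → ℝ} (hμ : ∀ ω, 0 ≤ μ ω) (hsum : ∑ ω, μ ω = 1)
    (X : Fin m → Ω → β) (S T : Finset (Fin m)) :
    entS μ X (S ∪ T) ≤ entS μ X S + entS μ X T := by
  have h := entS_submodular hμ hsum X S T
  have h0 := entS_nonneg hμ hsum X (S ∩ T)
  linarith

lemma entS_biUnion_le {μ : Ω → ℝ} (hμ : ∀ ω, 0 ≤ μ ω) (hsum : ∑ ω, μ ω = 1)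
    (X : Fin m → Ω → β) {ι : Type*} [DecidableEq ι] (s : Finset ι) (g : ι → Finset (Fin m)) :
    entS μ X (s.biUnion g) ≤ ∑ i ∈ s, entS μ X (g i) := by
  induction s using Finset.induction_on with
  | empty => simp [entS_empty hsum]
  | insert _ _ ha ih =>
    rw [Finset.biUnion_insert, Finset.sum_insert ha]
    exact le_trans (entS_union_le hμ hsum X _ _) (by linarith)

end finsetLayer

/-- Mutual information `I(Z^A; Z^B)` between two sub-collections of variables. -/
noncomputable def miS {Ω β : Type*} [Fintype Ω] [Fintype β] [DecidableEq β] {n : ℕ}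
    (μ : Ω → ℝ) (Z : Fin n → Ω → β) (A B : Finset (Fin n)) : ℝ :=
  entS μ Z A + entS μ Z B -
    ent μ (fun ω => ((fun i : {x // x ∈ A} => Z i ω), (fun i : {x // x ∈ B} => Z i ω)))

/-- Partition information of the partition given by `f : Fin k → Finset (Fin m)`. -/
noncomputable def partInfo {Ω β : Type*} [Fintype Ω] [Fintype β] [DecidableEq β] {m : ℕ}
    (μ : Ω → ℝ) (X : Fin m → Ω → β) {k : ℕ} (f : Fin k → Finset (Fin m)) : ℝ :=
  (1 / ((k : ℝ) - 1)) * ((∑ i, entS μ X (f i)) - entS μ X Finset.univ)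

section main

variable {Ω β : Type*} [Fintype Ω] [Fintype β] [DecidableEq β] {m k : ℕ}

/-- Marginalisation of the full independence hypothesis to subsets of blocks. -/
lemma marg_lemma (μ : Ω → ℝ) (hμ : ∀ ω, 0 ≤ μ ω) (hsum : ∑ ω, μ ω = 1)
    (X : Fin m → Ω → β) (f : Fin k → Finset (Fin m))
    (hindep : ∀ v : (i : Fin k) → ({x // x ∈ f i} → β),
      (∑ ω ∈ univ.filter
          (fun ω => ∀ i, (fun x : {x // x ∈ f i} => X x ω) = v i), μ ω)
        = ∏ i, ∑ ω ∈ univ.filter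
            (fun ω => (fun x : {x // x ∈ f i} => X x ω) = v i), μ ω) :
    ∀ (s : Finset (Fin k)) (v : (i : Fin k) → ({x // x ∈ f i} → β)),
      (∑ ω ∈ univ.filter
          (fun ω => ∀ i ∈ s, (fun x : {x // x ∈ f i} => X x ω) = v i), μ ω)
        = ∏ i ∈ s, pr μ (fun ω => fun x : {x // x ∈ f i} => X x ω) (v i) := by
  have step : ∀ (a : Fin k) (s : Finset (Fin k)), a ∉ s →
      (∀ v : (i : Fin k) → ({x // x ∈ f i} → β),
        (∑ ω ∈ univ.filter
            (fun ω => ∀ i ∈ insert a s, (fun x : {x // x ∈ f i} => X x ω) = v i), μ ω)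
          = ∏ i ∈ insert a s, pr μ (fun ω => fun x : {x // x ∈ f i} => X x ω) (v i)) →
      ∀ v : (i : Fin k) → ({x // x ∈ f i} → β),
        (∑ ω ∈ univ.filter
            (fun ω => ∀ i ∈ s, (fun x : {x // x ∈ f i} => X x ω) = v i), μ ω)
          = ∏ i ∈ s, pr μ (fun ω => fun x : {x // x ∈ f i} => X x ω) (v i) := by
    intro a s ha hins v
    rw [← Finset.sum_fiberwise
      (univ.filter (fun ω => ∀ i ∈ s, (fun x : {x // x ∈ f i} => X x ω) = v i))
      (fun ω => fun x : {x // x ∈ f a} => X x ω) μ]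
    have hterm : ∀ u : {x // x ∈ f a} → β,
        (∑ ω ∈ (univ.filter
            (fun ω => ∀ i ∈ s, (fun x : {x // x ∈ f i} => X x ω) = v i)).filter
            (fun ω => (fun x : {x // x ∈ f a} => X x ω) = u), μ ω)
          = pr μ (fun ω => fun x : {x // x ∈ f a} => X x ω) u *
              ∏ i ∈ s, pr μ (fun ω => fun x : {x // x ∈ f i} => X x ω) (v i) := by
      intro u
      rw [Finset.filter_filter]
      have e : (univ.filter (fun ω =>
          (∀ i ∈ s, (fun x : {x // x ∈ f i} => X x ω) = v i) ∧
            (fun x : {x // x ∈ f a} => X x ω) = u))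
          = univ.filter (fun ω => ∀ i ∈ insert a s,
              (fun x : {x // x ∈ f i} => X x ω) = Function.update v a u i) := by
        refine Finset.filter_congr fun ω _ => ?_
        rw [Finset.forall_mem_insert, Function.update_self]
        constructor
        · rintro ⟨h1, h2⟩
          exact ⟨h2, fun i hi => by
            rw [Function.update_of_ne (fun he => ha (by rwa [he] at hi))]; exact h1 i hi⟩
        · rintro ⟨h2, h1⟩
          exact ⟨fun i hi => by
            have := h1 i hi
            rwa [Function.update_of_ne (fun he => ha (by rwa [he] at hi))] at this, h2⟩
      rw [e, hins (Function.update v a u), Finset.prod_insert ha, Function.update_self]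
      congr 1
      refine Finset.prod_congr rfl fun i hi => ?_
      rw [Function.update_of_ne (fun he => ha (by rwa [he] at hi))]
    rw [Finset.sum_congr rfl (fun u _ => hterm u), ← Finset.sum_mul,
      sum_pr μ (fun ω => fun x : {x // x ∈ f a} => X x ω), hsum, one_mul]
  have base : ∀ v : (i : Fin k) → ({x // x ∈ f i} → β),
      (∑ ω ∈ univ.filter
          (fun ω => ∀ i ∈ (univ : Finset (Fin k)),
            (fun x : {x // x ∈ f i} => X x ω) = v i), μ ω)
        = ∏ i ∈ (univ : Finset (Fin k)),
            pr μ (fun ω => fun x : {x // x ∈ f i} => X x ω) (v i) := by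
    intro v
    have e : (univ.filter (fun ω => ∀ i ∈ (univ : Finset (Fin k)),
        (fun x : {x // x ∈ f i} => X x ω) = v i))
        = univ.filter (fun ω => ∀ i, (fun x : {x // x ∈ f i} => X x ω) = v i) :=
      Finset.filter_congr fun ω _ => by simp
    rw [e]
    exact hindep v
  have down : ∀ t : Finset (Fin k), ∀ v : (i : Fin k) → ({x // x ∈ f i} → β),
      (∑ ω ∈ univ.filter
          (fun ω => ∀ i ∈ (univ : Finset (Fin k)) \ t,
            (fun x : {x // x ∈ f i} => X x ω) = v i), μ ω)
        = ∏ i ∈ (univ : Finset (Fin k)) \ t,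
            pr μ (fun ω => fun x : {x // x ∈ f i} => X x ω) (v i) := by
    intro t
    induction t using Finset.induction_on with
    | empty => rw [Finset.sdiff_empty]; exact base
    | @insert a t' ha ih =>
      have e : insert a ((univ : Finset (Fin k)) \ insert a t')
          = (univ : Finset (Fin k)) \ t' := by
        ext x
        simp only [Finset.mem_insert, Finset.mem_sdiff, Finset.mem_univ, true_and]
        by_cases hx : x = a
        · subst hx; simp [ha]
        · simp [hx]
      refine step a _ (by simp) (fun w => ?_)
      rw [e]
      exact ih w
  intro s v
  have e : (univ : Finset (Fin k)) \ ((univ : Finset (Fin k)) \ s) = s := by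
    rw [Finset.sdiff_sdiff_self_left, Finset.univ_inter]
  have := down ((univ : Finset (Fin k)) \ s) v
  rwa [e] at this

lemma entS_blocks (μ : Ω → ℝ) (hμ : ∀ ω, 0 ≤ μ ω) (hsum : ∑ ω, μ ω = 1)
    (X : Fin m → Ω → β) (f : Fin k → Finset (Fin m))
    (hdisj : ∀ i j, i ≠ j → Disjoint (f i) (f j))
    (hindep : ∀ v : (i : Fin k) → ({x // x ∈ f i} → β),
      (∑ ω ∈ univ.filter
          (fun ω => ∀ i, (fun x : {x // x ∈ f i} => X x ω) = v i), μ ω)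
        = ∏ i, ∑ ω ∈ univ.filter
            (fun ω => (fun x : {x // x ∈ f i} => X x ω) = v i), μ ω)
    (hβ : Nonempty β) :
    ∀ s : Finset (Fin k), entS μ X (s.biUnion f) = ∑ i ∈ s, entS μ X (f i) := by
  have marg := marg_lemma μ hμ hsum X f hindep
  intro s
  induction s using Finset.induction_on with
  | empty => simp [entS_empty hsum]
  | @insert a s ha ih =>
    rw [Finset.biUnion_insert, Finset.sum_insert ha, ← ih]
    set B := s.biUnion f with hB
    have indep : ∀ (u : {x // x ∈ f a} → β) (w : {x // x ∈ B} → β),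
        pr μ (fun ω => ((fun x : {x // x ∈ f a} => X x ω),
            (fun x : {x // x ∈ B} => X x ω))) (u, w)
          = pr μ (fun ω => fun x : {x // x ∈ f a} => X x ω) u *
              pr μ (fun ω => fun x : {x // x ∈ B} => X x ω) w := by
      intro u w
      classical
      set v : (i : Fin k) → ({x // x ∈ f i} → β) := fun i x =>
        if hx : (x : Fin m) ∈ f a then u ⟨x, hx⟩
        else if hBx : (x : Fin m) ∈ B then w ⟨x, hBx⟩ else Classical.arbitrary β with hv
      have hva : v a = u := by
        funext x
        rw [hv]
        dsimp only
        rw [dif_pos x.2]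
      have hvs : ∀ (i : Fin k) (hi : i ∈ s) (x : {y // y ∈ f i}),
          v i x = w ⟨x, Finset.mem_biUnion.2 ⟨i, hi, x.2⟩⟩ := by
        intro i hi x
        have hia : i ≠ a := fun he => ha (by rwa [he] at hi)
        have hxa : (x : Fin m) ∉ f a := Finset.disjoint_left.1 (hdisj i a hia) x.2
        rw [hv]
        dsimp only
        rw [dif_neg hxa, dif_pos (Finset.mem_biUnion.2 ⟨i, hi, x.2⟩)]
      have E2 : ∀ ω, ((fun x : {y // y ∈ B} => X x ω) = w) ↔
          (∀ i ∈ s, (fun x : {y // y ∈ f i} => X x ω) = v i) := by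
        intro ω
        constructor
        · intro hw i hi
          funext x
          have h1 := congrFun hw ⟨(x : Fin m), Finset.mem_biUnion.2 ⟨i, hi, x.2⟩⟩
          dsimp only at h1 ⊢
          rw [h1, hvs i hi x]
        · intro h
          funext y
          obtain ⟨i, hi, hyi⟩ := Finset.mem_biUnion.1 y.2
          have h1 := congrFun (h i hi) ⟨(y : Fin m), hyi⟩
          dsimp only at h1 ⊢
          rw [h1, hvs i hi ⟨(y : Fin m), hyi⟩]
      have E1 : ∀ ω, (((fun x : {y // y ∈ f a} => X x ω),
            (fun x : {y // y ∈ B} => X x ω)) = (u, w)) ↔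
          (∀ i ∈ insert a s, (fun x : {y // y ∈ f i} => X x ω) = v i) := by
        intro ω
        rw [Finset.forall_mem_insert, hva, Prod.mk.injEq]
        exact and_congr_right fun _ => E2 ω
      have c1 : pr μ (fun ω => ((fun x : {x // x ∈ f a} => X x ω),
          (fun x : {x // x ∈ B} => X x ω))) (u, w)
          = ∑ ω ∈ univ.filter (fun ω => ∀ i ∈ insert a s,
              (fun x : {y // y ∈ f i} => X x ω) = v i), μ ω := by
        unfold pr
        congr 1
        exact Finset.filter_congr fun ω _ => E1 ω
      have c2 : pr μ (fun ω => fun x : {x // x ∈ B} => X x ω) w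
          = ∑ ω ∈ univ.filter (fun ω => ∀ i ∈ s,
              (fun x : {y // y ∈ f i} => X x ω) = v i), μ ω := by
        unfold pr
        congr 1
        exact Finset.filter_congr fun ω _ => E2 ω
      rw [c1, c2, marg (insert a s) v, marg s v, Finset.prod_insert ha, hva]
    have hpair := ent_pair_of_indep hsum
      (fun ω => fun x : {x // x ∈ f a} => X x ω)
      (fun ω => fun x : {x // x ∈ B} => X x ω) indep
    have := ent_pair_eq μ X (f a) B
    rw [← this]
    exact hpair
end main

/-- If the blocks of the partition `P*` (given by `f`) are mutually independent and
`|P*| > 1`, then `I_{P*} = 0` and `P*` minimizes the partition information over all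
partitions with more than one cluster.  Moreover, if within each cluster of `P*` any two
complementary sub-groups have strictly positive mutual information, then every partition `P`
with `I_P = 0` is coarser than `P*`: each cluster of `P*` is contained in a cluster of `P`. -/
theorem stmt13 {Ω β : Type*} [Fintype Ω] [Fintype β] [DecidableEq β]
    (m k : ℕ) (hk : 1 < k)
    (μ : Ω → ℝ) (hμ : ∀ ω, 0 ≤ μ ω) (hsum : ∑ ω, μ ω = 1)
    (X : Fin m → Ω → β) (f : Fin k → Finset (Fin m))
    (hdisj : ∀ i j, i ≠ j → Disjoint (f i) (f j))
    (hcover : Finset.univ.biUnion f = (Finset.univ : Finset (Fin m)))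
    (hne : ∀ i, (f i).Nonempty)
    (hindep : ∀ v : (i : Fin k) → ({x // x ∈ f i} → β),
      (∑ ω ∈ univ.filter
          (fun ω => ∀ i, (fun x : {x // x ∈ f i} => X x ω) = v i), μ ω)
        = ∏ i, ∑ ω ∈ univ.filter
            (fun ω => (fun x : {x // x ∈ f i} => X x ω) = v i), μ ω) :
    partInfo μ X f = 0 ∧
    (∀ (l : ℕ), 1 < l → ∀ g : Fin l → Finset (Fin m),
      (∀ i j, i ≠ j → Disjoint (g i) (g j)) →
      Finset.univ.biUnion g = (Finset.univ : Finset (Fin m)) →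
      (∀ i, (g i).Nonempty) →
      partInfo μ X f ≤ partInfo μ X g) ∧
    ((∀ i : Fin k, ∀ A B : Finset (Fin m), A.Nonempty → B.Nonempty →
        Disjoint A B → A ∪ B = f i → 0 < miS μ X A B) →
      ∀ (l : ℕ), 1 < l → ∀ g : Fin l → Finset (Fin m),
        (∀ i j, i ≠ j → Disjoint (g i) (g j)) →
        Finset.univ.biUnion g = (Finset.univ : Finset (Fin m)) →
        (∀ i, (g i).Nonempty) →
        partInfo μ X g = 0 →
        ∀ i : Fin k, ∃ j : Fin l, f i ⊆ g j) := by
  have hβ : Nonempty β := by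
    have hΩ : Nonempty Ω := by
      by_contra h
      rw [not_nonempty_iff] at h
      rw [Finset.univ_eq_empty, Finset.sum_empty] at hsum
      exact one_ne_zero hsum.symm
    obtain ⟨x0, _⟩ := hne ⟨0, by omega⟩
    exact ⟨X x0 (Classical.arbitrary Ω)⟩
  have Hsum := entS_blocks μ hμ hsum X f hdisj hindep hβ
  have Htot : (∑ i, entS μ X (f i)) = entS μ X Finset.univ := by
    rw [← hcover]
    exact (Hsum Finset.univ).symm
  have part1 : partInfo μ X f = 0 := by
    unfold partInfo
    rw [Htot, sub_self, mul_zero]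
  refine ⟨part1, ?_, ?_⟩
  · intro l hl g hgd hgc hgn
    rw [part1]
    unfold partInfo
    apply mul_nonneg
    · apply div_nonneg zero_le_one
      have : (2:ℝ) ≤ (l:ℝ) := by exact_mod_cast hl
      linarith
    · have h1 : entS μ X (Finset.univ : Finset (Fin m)) ≤ ∑ i, entS μ X (g i) := by
        rw [← hgc]
        exact entS_biUnion_le hμ hsum X Finset.univ g
      linarith
  · intro hpos l hl g hgd hgc hgn hg0 i
    have hl2 : (2:ℝ) ≤ (l:ℝ) := by exact_mod_cast hl
    have hSg : (∑ j, entS μ X (g j)) = entS μ X Finset.univ := by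
      unfold partInfo at hg0
      rcases mul_eq_zero.1 hg0 with h | h
      · exfalso
        rw [div_eq_zero_iff] at h
        rcases h with h | h
        · exact one_ne_zero h
        · linarith
      · exact sub_eq_zero.1 h
    obtain ⟨x, hx⟩ := hne i
    have hxu : x ∈ Finset.univ.biUnion g := by rw [hgc]; exact Finset.mem_univ x
    obtain ⟨j0, -, hxg⟩ := Finset.mem_biUnion.1 hxu
    refine ⟨j0, ?_⟩
    by_contra hnsub
    have hBne : (f i \ g j0).Nonempty := by
      rw [Finset.sdiff_nonempty]
      exact hnsub
    set A := f i ∩ g j0 with hAdef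
    set B := f i \ g j0 with hBdef
    set C := (Finset.univ : Finset (Fin m)) \ g j0 with hCdef
    have hA : A.Nonempty := ⟨x, Finset.mem_inter.2 ⟨hx, hxg⟩⟩
    have hAg : A ⊆ g j0 := Finset.inter_subset_right
    have hBC : B ⊆ C := Finset.sdiff_subset_sdiff (Finset.subset_univ _) le_rfl
    have hdAB : Disjoint A B := (Finset.sdiff_disjoint).symm.mono_left hAg
    have hunion : A ∪ B = f i := by
      rw [hAdef, hBdef]
      ext a
      simp only [Finset.mem_union, Finset.mem_inter, Finset.mem_sdiff]
      tauto
    have hmi := hpos i A B hA hBne hdAB hunion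
    have hmiS : miS μ X A B = entS μ X A + entS μ X B - entS μ X (A ∪ B) := by
      unfold miS
      rw [ent_pair_eq]
    have hCg : Disjoint C (g j0) := Finset.sdiff_disjoint
    have hACg : Disjoint A C := (hCg.symm.mono_left hAg).symm.symm
    have e11 : (A ∪ B) ∪ C = A ∪ C := by
      rw [Finset.union_assoc, Finset.union_eq_right.2 hBC]
    have e12 : (A ∪ B) ∩ C = B := by
      rw [Finset.union_inter_distrib_right, Finset.disjoint_iff_inter_eq_empty.1 hACg,
        Finset.empty_union, Finset.inter_eq_left.2 hBC]
    have step1 := entS_submodular hμ hsum X (A ∪ B) C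
    rw [e11, e12] at step1
    have e21 : (A ∪ C) ∪ g j0 = Finset.univ := by
      ext a
      simp only [Finset.mem_union, hCdef, Finset.mem_sdiff, Finset.mem_univ, true_and, iff_true]
      tauto
    have e22 : (A ∪ C) ∩ g j0 = A := by
      rw [Finset.union_inter_distrib_right, Finset.inter_eq_left.2 hAg,
        Finset.disjoint_iff_inter_eq_empty.1 hCg, Finset.union_empty]
    have step2 := entS_submodular hμ hsum X (A ∪ C) (g j0)
    rw [e21, e22] at step2
    have hCb : C = (Finset.univ.erase j0).biUnion g := by
      ext a
      simp only [hCdef, Finset.mem_sdiff, Finset.mem_univ, true_and, Finset.mem_biUnion,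
        Finset.mem_erase]
      constructor
      · intro haj
        have hau : a ∈ Finset.univ.biUnion g := by rw [hgc]; exact Finset.mem_univ a
        obtain ⟨j, -, haj'⟩ := Finset.mem_biUnion.1 hau
        exact ⟨j, ⟨fun he => haj (by rwa [he] at haj'), trivial⟩, haj'⟩
      · rintro ⟨j, ⟨hjne, -⟩, haj⟩
        exact fun hga => (Finset.disjoint_left.1 (hgd j j0 hjne) haj) hga
    have step3 : entS μ X C ≤ ∑ j ∈ Finset.univ.erase j0, entS μ X (g j) := by
      rw [hCb]
      exact entS_biUnion_le hμ hsum X _ g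
    have hsum_erase : entS μ X (g j0) + ∑ j ∈ Finset.univ.erase j0, entS μ X (g j)
        = ∑ j, entS μ X (g j) :=
      Finset.add_sum_erase Finset.univ (fun j => entS μ X (g j)) (Finset.mem_univ j0)
    rw [hmiS] at hmi
    linarith
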